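/- arXiv:0812.4919 — 2 statements merged into one kernel-verified Lean document; each statement's English description precedes it below -/
import Mathlib

section
/- The hexagonal grid H_r of radius r is isomorphic to a subgraph of the (4r−1) × (4r−1) rectangular grid. -/
open SimpleGraph

/-- `A` is a subdivision of `H`: branch vertices given by an injective map `f`, and each
edge of `H` is replaced by a path in `A`; the paths are internally disjoint, internal
vertices avoid branch vertices, and every vertex and edge of `A` is used. -/
def IsSubdivisionOf {U W : Type*} (A : SimpleGraph U) (H : SimpleGraph W) : Prop :=
  ∃ (f : W → U) (p : ∀ ⦃a b⦄, H.Adj a b → A.Walk (f a) (f b)),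
    Function.Injective f ∧
    (∀ ⦃a b⦄ (h : H.Adj a b), (p h).IsPath) ∧
    (∀ ⦃a b⦄ (h : H.Adj a b) (w : W), f w ∈ (p h).support → w = a ∨ w = b) ∧
    (∀ ⦃a b⦄ (h : H.Adj a b) ⦃c d⦄ (h' : H.Adj c d), s(a, b) ≠ s(c, d) →
      ∀ u, u ∈ (p h).support → u ∈ (p h').support →
        (u = f a ∨ u = f b) ∧ (u = f c ∨ u = f d)) ∧
    (∀ u : U, u ∈ Set.range f ∨ ∃ (a b : W) (h : H.Adj a b), u ∈ (p h).support) ∧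
    (∀ e ∈ A.edgeSet, ∃ (a b : W) (h : H.Adj a b), e ∈ (p h).edges)

/-- `G` contains a subdivision of `H` as a subgraph (i.e. `H` is a topological minor). -/
def ContainsSubdivisionOf {V W : Type*} (G : SimpleGraph V) (H : SimpleGraph W) : Prop :=
  ∃ A : G.Subgraph, IsSubdivisionOf A.coe H

/-- Planarity, via Kuratowski's characterization. -/
def IsPlanar {V : Type*} (G : SimpleGraph V) : Prop :=
  ¬ ContainsSubdivisionOf G (completeGraph (Fin 5)) ∧
  ¬ ContainsSubdivisionOf G (completeBipartiteGraph (Fin 3) (Fin 3))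

/-- `G ∈ Apex(k)`: some set of at most `k` vertices can be deleted to leave a planar graph. -/
def Apex {V : Type*} (k : ℕ) (G : SimpleGraph V) : Prop :=
  ∃ X : Finset V, X.card ≤ k ∧ IsPlanar (G.induce ((X : Set V)ᶜ))

/-- `H` is a minor of `G`, via branch sets. -/
def HasMinor {V W : Type*} (G : SimpleGraph V) (H : SimpleGraph W) : Prop :=
  ∃ f : W → Set V,
    (∀ w, (f w).Nonempty) ∧
    (∀ w, (G.induce (f w)).Connected) ∧
    (∀ w w', w ≠ w' → Disjoint (f w) (f w')) ∧
    (∀ ⦃w w'⦄, H.Adj w w' → ∃ a ∈ f w, ∃ b ∈ f w', G.Adj a b)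

/-- `G` has a tree decomposition of width at most `w`. -/
def HasTreeDecompositionOfWidth {V : Type*} (G : SimpleGraph V) (w : ℕ) : Prop :=
  ∃ (ι : Type) (T : SimpleGraph ι) (B : ι → Finset V),
    T.IsAcyclic ∧ T.Connected ∧
    (∀ v : V, ∃ t, v ∈ B t) ∧
    (∀ ⦃u v⦄, G.Adj u v → ∃ t, u ∈ B t ∧ v ∈ B t) ∧
    (∀ v : V, (T.induce {t | v ∈ B t}).Connected) ∧
    (∀ t, (B t).card ≤ w + 1)

/-- The treewidth of `G`. -/
noncomputable def treewidth {V : Type*} (G : SimpleGraph V) : ℕ :=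
  sInf {w | HasTreeDecompositionOfWidth G w}

/-- The vertex set of the hexagonal grid of radius `r` (brick-wall model in `ℤ × ℤ`). -/
def hexVertexSet (r : ℕ) : Set (ℤ × ℤ) :=
  {p | ∃ b : ℤ, |b| ≤ (r : ℤ) - 1 ∧ (p.2 = b ∨ p.2 = b + 1) ∧ |p.1| ≤ 2 * (r : ℤ) - 1 - |b|}

/-- The hexagonal grid `H_r` of radius `r` (brick-wall model). -/
def hexGrid (r : ℕ) : SimpleGraph (hexVertexSet r) :=
  SimpleGraph.fromRel fun p q =>
    (p.val.2 = q.val.2 ∧ p.val.1 + 1 = q.val.1) ∨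
    (p.val.1 = q.val.1 ∧ p.val.2 + 1 = q.val.2 ∧ Odd (p.val.1 + p.val.2))

/-- The `g × g` grid graph. -/
def gridGraph (g : ℕ) : SimpleGraph (Fin g × Fin g) :=
  SimpleGraph.fromRel fun p q =>
    (p.1 = q.1 ∧ (p.2 : ℕ) + 1 = (q.2 : ℕ)) ∨ (p.2 = q.2 ∧ (p.1 : ℕ) + 1 = (q.1 : ℕ))

/-- the hexagonal grid `H_r` is isomorphic to a subgraph of the
`(4r−1) × (4r−1)` rectangular grid. -/
theorem stmt7 (r : ℕ) (hr : 1 ≤ r) :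
    ∃ f : hexVertexSet r → Fin (4 * r - 1) × Fin (4 * r - 1),
      Function.Injective f ∧
      ∀ a b, (hexGrid r).Adj a b → (gridGraph (4 * r - 1)).Adj (f a) (f b) := by
  have hbounds : ∀ p : hexVertexSet r,
      -(2*(r:ℤ)-1) ≤ p.val.1 ∧ p.val.1 ≤ 2*(r:ℤ)-1 ∧
      -((r:ℤ)-1) ≤ p.val.2 ∧ p.val.2 ≤ (r:ℤ) := by
    rintro ⟨⟨x, y⟩, b, hb, hy, hxb⟩
    have hb0 := abs_nonneg b
    rw [abs_le] at hb hxb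
    dsimp only at hy hxb ⊢
    obtain ⟨hb1, hb2⟩ := hb
    rcases hy with h | h <;> omega
  have hx1 : ∀ p : hexVertexSet r, 0 ≤ p.val.1 + 2*(r:ℤ) - 1 := fun p => by
    have := hbounds p; omega
  have hx2 : ∀ p : hexVertexSet r, (p.val.1 + 2*(r:ℤ) - 1).toNat < 4 * r - 1 := fun p => by
    have := hbounds p; omega
  have hy1 : ∀ p : hexVertexSet r, 0 ≤ p.val.2 + (r:ℤ) - 1 := fun p => by
    have := hbounds p; omega
  have hy2 : ∀ p : hexVertexSet r, (p.val.2 + (r:ℤ) - 1).toNat < 4 * r - 1 := fun p => by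
    have := hbounds p; omega
  refine ⟨fun p => (⟨(p.val.1 + 2*(r:ℤ) - 1).toNat, hx2 p⟩, ⟨(p.val.2 + (r:ℤ) - 1).toNat, hy2 p⟩),
    ?_, ?_⟩
  · intro a b h
    have h1 := congrArg (fun q => (q.1 : ℕ)) h
    have h2 := congrArg (fun q => (q.2 : ℕ)) h
    simp only at h1 h2
    have ha := hx1 a; have hb := hx1 b; have ha2 := hy1 a; have hb2 := hy1 b
    apply Subtype.ext
    have : a.val.1 = b.val.1 := by omega
    have : a.val.2 = b.val.2 := by omega
    exact Prod.ext ‹a.val.1 = b.val.1› ‹a.val.2 = b.val.2›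
  · intro a b hab
    obtain ⟨hne, hrel⟩ := hab
    have ha1 := hx1 a; have hb1 := hx1 b; have ha2 := hy1 a; have hb2 := hy1 b
    constructor
    · intro h
      apply hne
      have h1 := congrArg (fun q => (q.1 : ℕ)) h
      have h2 := congrArg (fun q => (q.2 : ℕ)) h
      simp only at h1 h2
      apply Subtype.ext
      exact Prod.ext (by omega) (by omega)
    · rcases hrel with (⟨hy, hx⟩ | ⟨hx, hy, _⟩) | (⟨hy, hx⟩ | ⟨hx, hy, _⟩)
      · exact Or.inl (Or.inr ⟨Fin.ext (by dsimp only; omega), by dsimp only; omega⟩)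
      · exact Or.inl (Or.inl ⟨Fin.ext (by dsimp only; omega), by dsimp only; omega⟩)
      · exact Or.inr (Or.inr ⟨Fin.ext (by dsimp only; omega), by dsimp only; omega⟩)
      · exact Or.inr (Or.inl ⟨Fin.ext (by dsimp only; omega), by dsimp only; omega⟩)
end

section
/- Let G be a graph and W ⊆ V(G). Suppose that for every X ⊆ V(G) with |X| ≤ k such that G − X is planar, W ⊆ X. Then G ∈ Apex(k) if and only if |W| ≤ k and G − W ∈ Apex(k − |W|). -/
open SimpleGraph

lemma IsSubdivisionOf.of_iso {U U' W : Type*} {A : SimpleGraph U} {B : SimpleGraph U'}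
    {H : SimpleGraph W} (e : A ≃g B) (h : IsSubdivisionOf A H) : IsSubdivisionOf B H := by
  obtain ⟨f, p, hf, hpath, hbranch, hdisj, hcover, hedge⟩ := h
  refine ⟨fun w => e (f w), fun a b hab => (p hab).map e.toHom,
    e.injective.comp hf, ?_, ?_, ?_, ?_, ?_⟩
  · intro a b hab
    exact Walk.map_isPath_of_injective e.injective (hpath hab)
  · intro a b hab w hw
    rw [Walk.support_map, List.mem_map] at hw
    obtain ⟨u, hu, hu2⟩ := hw
    exact hbranch hab w (e.injective hu2 ▸ hu)
  · intro a b hab c d hcd hne u hu hu'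
    rw [Walk.support_map, List.mem_map] at hu hu'
    obtain ⟨x, hx, rfl⟩ := hu
    obtain ⟨y, hy, hxy⟩ := hu'
    have hyx : y = x := e.injective hxy
    subst hyx
    obtain ⟨h1, h2⟩ := hdisj hab hcd hne y hx hy
    exact ⟨h1.imp (congrArg e) (congrArg e), h2.imp (congrArg e) (congrArg e)⟩
  · intro u
    rcases hcover (e.symm u) with ⟨w, hw⟩ | ⟨a, b, hab, hu⟩
    · left; exact ⟨w, by simp [hw]⟩
    · right
      refine ⟨a, b, hab, ?_⟩
      rw [Walk.support_map, List.mem_map]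
      exact ⟨e.symm u, hu, by simp⟩
  · intro ed hed
    induction ed with
    | _ x y =>
      rw [mem_edgeSet] at hed
      have hA : A.Adj (e.symm x) (e.symm y) := e.symm.map_rel_iff.mpr hed
      obtain ⟨a, b, hab, hm⟩ := hedge s(e.symm x, e.symm y) hA
      refine ⟨a, b, hab, ?_⟩
      rw [Walk.edges_map, List.mem_map]
      exact ⟨s(e.symm x, e.symm y), hm, by simp⟩

lemma ContainsSubdivisionOf.of_iso {V V' W : Type*} {G : SimpleGraph V} {G' : SimpleGraph V'}
    {H : SimpleGraph W} (e : G ≃g G') (h : ContainsSubdivisionOf G H) :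
    ContainsSubdivisionOf G' H := by
  obtain ⟨A, hA⟩ := h
  refine ⟨A.map e.toHom, hA.of_iso ?_⟩
  refine ⟨Equiv.Set.image e.toHom A.verts e.injective, ?_⟩
  intro a b
  simp only [Subgraph.map_verts, Equiv.Set.image_apply, Subgraph.coe_adj, Subgraph.map_adj,
    Relation.Map]
  constructor
  · rintro ⟨x, y, hxy, hx, hy⟩
    rw [e.injective hx, e.injective hy] at hxy
    exact hxy
  · intro h
    exact ⟨a, b, h, rfl, rfl⟩

lemma IsPlanar.of_iso {V V' : Type*} {G : SimpleGraph V} {G' : SimpleGraph V'}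
    (e : G ≃g G') (h : IsPlanar G) : IsPlanar G' :=
  ⟨fun c => h.1 (c.of_iso e.symm), fun c => h.2 (c.of_iso e.symm)⟩

/-- Iso between a nested induced subgraph and the induced subgraph on the image set. -/
noncomputable def induceInduceIso {V : Type*} (G : SimpleGraph V) (s : Set V) (t : Set ↥s) :
    (G.induce s).induce t ≃g G.induce (Subtype.val '' t) where
  toEquiv := Equiv.Set.image Subtype.val t Subtype.val_injective
  map_rel_iff' := by
    intro a b
    simp only [Equiv.Set.image_apply, comap_adj, Function.Embedding.coe_subtype]

/-- Iso between induced subgraphs on equal sets. -/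
def induceCongr {V : Type*} (G : SimpleGraph V) {s t : Set V} (h : s = t) :
    G.induce s ≃g G.induce t := by
  subst h; exact ⟨Equiv.refl _, Iff.rfl⟩

lemma image_compl_aux {V : Type*} (W : Finset V) (X' : Finset ↥((W : Set V)ᶜ)) :
    Subtype.val '' ((X' : Set ↥((W : Set V)ᶜ))ᶜ) =
      ((W : Set V) ∪ Subtype.val '' (X' : Set ↥((W : Set V)ᶜ)))ᶜ := by
  ext v
  simp only [Set.mem_image, Set.mem_compl_iff, Set.mem_union, Finset.mem_coe, not_or]
  constructor
  · rintro ⟨x, hx, rfl⟩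
    refine ⟨x.2, ?_⟩
    rintro ⟨y, hy, hyx⟩
    exact hx (Subtype.ext hyx ▸ hy)
  · rintro ⟨h1, h2⟩
    exact ⟨⟨v, h1⟩, fun h => h2 ⟨⟨v, h1⟩, h, rfl⟩, rfl⟩

/-- kernel equivalence: if every apex set of size at most `k`
contains `W`, then `G ∈ Apex(k)` iff `|W| ≤ k` and `G − W ∈ Apex(k − |W|)`. -/
theorem stmt16 {V : Type*} (G : SimpleGraph V) (k : ℕ) (W : Finset V)
    (hforced : ∀ X : Finset V, X.card ≤ k → IsPlanar (G.induce ((X : Set V)ᶜ)) → W ⊆ X) :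
    Apex k G ↔ W.card ≤ k ∧ Apex (k - W.card) (G.induce ((W : Set V)ᶜ)) := by
  classical
  constructor
  · rintro ⟨X, hXk, hXpl⟩
    have hWX : W ⊆ X := hforced X hXk hXpl
    have hWk : W.card ≤ k := le_trans (Finset.card_le_card hWX) hXk
    refine ⟨hWk, ?_⟩
    set X' : Finset ↥((W : Set V)ᶜ) :=
      (X \ W).subtype (fun v => v ∈ ((W : Set V)ᶜ)) with hX'def
    refine ⟨X', ?_, ?_⟩
    · have h1 : X'.card = (X \ W).card := by
        rw [hX'def, Finset.card_subtype]
        congr 1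
        apply Finset.filter_true_of_mem
        intro v hv
        simpa using (Finset.mem_sdiff.mp hv).2
      rw [h1, Finset.card_sdiff_of_subset hWX]
      exact Nat.sub_le_sub_right hXk _
    · have hval : Subtype.val '' (X' : Set ↥((W : Set V)ᶜ)) = ((X \ W : Finset V) : Set V) := by
        ext v
        simp only [Set.mem_image, Finset.mem_coe, hX'def, Finset.mem_subtype]
        constructor
        · rintro ⟨x, hx, rfl⟩; exact hx
        · intro hv
          exact ⟨⟨v, by simpa using (Finset.mem_sdiff.mp hv).2⟩, hv, rfl⟩
      have hseteq : Subtype.val '' ((X' : Set ↥((W : Set V)ᶜ))ᶜ) = ((X : Finset V) : Set V)ᶜ := by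
        rw [image_compl_aux, hval]
        congr 1
        ext v
        simp only [Set.mem_union, Finset.mem_coe, Finset.mem_sdiff]
        constructor
        · rintro (h | ⟨h, _⟩)
          · exact hWX h
          · exact h
        · intro h
          by_cases hw : v ∈ W
          · exact Or.inl hw
          · exact Or.inr ⟨h, hw⟩
      exact hXpl.of_iso ((induceInduceIso G ((W : Set V)ᶜ)
        ((X' : Set ↥((W : Set V)ᶜ))ᶜ)).trans (induceCongr G hseteq)).symm
  · rintro ⟨hWk, X', hX'card, hX'pl⟩
    set X : Finset V := W ∪ X'.map (Function.Embedding.subtype _) with hXdef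
    refine ⟨X, ?_, ?_⟩
    · calc X.card ≤ W.card + (X'.map (Function.Embedding.subtype _)).card :=
            Finset.card_union_le _ _
        _ = W.card + X'.card := by rw [Finset.card_map]
        _ ≤ W.card + (k - W.card) := by omega
        _ = k := by omega
    · have hseteq : Subtype.val '' ((X' : Set ↥((W : Set V)ᶜ))ᶜ) = ((X : Finset V) : Set V)ᶜ := by
        rw [image_compl_aux]
        congr 1
        rw [hXdef]
        ext v
        simp [Set.mem_image]
      exact hX'pl.of_iso ((induceInduceIso G ((W : Set V)ᶜ)
        ((X' : Set ↥((W : Set V)ᶜ))ᶜ)).trans (induceCongr G hseteq))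
end
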